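/- Every finitely generated subgroup of a free abelian group (of arbitrary rank) is closed in the profinite topology; i.e., free abelian groups are LERF. -/

import Mathlib

open Topology

/-- The profinite topology on an additive group `G`: generated by the cosets of
the finite-index (normal) additive subgroups. -/
def profiniteTopologyAdd (G : Type*) [AddGroup G] : TopologicalSpace G :=
  TopologicalSpace.generateFrom
    {S : Set G | ∃ K : AddSubgroup G, K.Normal ∧ K.index ≠ 0 ∧
      ∃ g : G, S = (g + ·) '' (K : Set G)}

lemma resid_fin {Q : Type*} [AddCommGroup Q] (hQ : AddGroup.FG Q) {q : Q} (hq : q ≠ 0) :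
    ∃ n : ℤ, 0 < n ∧ ∀ y : Q, q ≠ n • y := by
  classical
  haveI := hQ
  obtain ⟨r, ι, fι, p, hp, e, ⟨φ⟩⟩ := AddCommGroup.equiv_free_prod_directSum_zmod Q
  haveI := fι
  haveI : ∀ i, NeZero (p i ^ e i) := fun i => ⟨pow_ne_zero _ (hp i).pos.ne'⟩
  haveI : Finite (DirectSum ι fun i => ZMod (p i ^ e i)) :=
    Finite.of_injective _ DFunLike.coe_injective
  have hw0 : φ q ≠ 0 := fun h => hq (by simpa using φ.injective (h.trans (map_zero φ).symm))
  by_cases hf : (φ q).1 = 0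
  · have hd : (φ q).2 ≠ 0 := fun h => hw0 (Prod.ext hf h)
    set k := Nat.card (DirectSum ι fun i => ZMod (p i ^ e i)) with hk
    have hk0 : 0 < k := Nat.card_pos
    refine ⟨(k : ℤ), by exact_mod_cast hk0, fun y hy => ?_⟩
    apply hd
    have h1 : (φ q).2 = (k : ℤ) • (φ y).2 := by
      rw [hy, map_zsmul]
      exact map_zsmul (AddMonoidHom.snd (Fin r →₀ ℤ) (DirectSum ι fun i => ZMod (p i ^ e i))) (k : ℤ) (φ y)
    rw [h1, natCast_zsmul, card_nsmul_eq_zero']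
  · have hc : ∃ j, (φ q).1 j ≠ 0 := by
      by_contra hcon
      push_neg at hcon
      exact hf (Finsupp.ext hcon)
    obtain ⟨j, hj⟩ := hc
    refine ⟨|(φ q).1 j| + 1, by positivity, fun y hy => ?_⟩
    have h1 : (φ q).1 j = ↑(|(φ q).1 j| + 1) * ((φ y).1 j) := by
      have h2 := congrArg (fun z => (φ z).1 j) hy
      rw [map_zsmul φ] at h2
      rw [show ((|(φ q).1 j| + 1) • φ y).1 = (|(φ q).1 j| + 1) • (φ y).1 from
        map_zsmul (AddMonoidHom.fst (Fin r →₀ ℤ) (DirectSum ι fun i => ZMod (p i ^ e i)))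
          (|(φ q).1 j| + 1) (φ y)] at h2
      rw [show ((|(φ q).1 j| + 1) • (φ y).1) j = (|(φ q).1 j| + 1) • ((φ y).1 j) from
        map_zsmul (Finsupp.applyAddHom (M := ℤ) j) (|(φ q).1 j| + 1) ((φ y).1)] at h2
      rw [zsmul_eq_mul] at h2
      exact h2
    have hdvd : (|(φ q).1 j| + 1) ∣ (φ q).1 j := ⟨(φ y).1 j, h1⟩
    have hle := Int.le_of_dvd (abs_pos.mpr hj) ((dvd_abs _ _).mpr hdvd)
    omega

-- key separation step
lemma key_step (A : Type*) (H : AddSubgroup (A →₀ ℤ)) (hfg : H.FG)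
    (x : A →₀ ℤ) (hx : x ∉ H) :
    ∃ K : AddSubgroup (A →₀ ℤ), K.index ≠ 0 ∧ ∀ k ∈ K, x + k ∉ H := by
  classical
  obtain ⟨s, hs⟩ := hfg
  set B : Finset A := s.sup (fun f => f.support) ∪ x.support with hB
  set L : Submodule ℤ (A →₀ ℤ) := Finsupp.supported ℤ ℤ (↑B : Set A) with hL
  have hxL : x ∈ L := by
    rw [hL, Finsupp.mem_supported]
    exact fun a ha => Finset.mem_union_right _ ha
  have hHL : ∀ h ∈ H, h ∈ L := by
    intro h hh
    rw [← hs] at hh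
    induction hh using AddSubgroup.closure_induction with
    | mem g hg =>
      rw [hL, Finsupp.mem_supported]
      intro a ha
      have hsub : g.support ⊆ s.sup fun f => f.support := Finset.le_sup hg
      exact Finset.mem_union_left _ (hsub ha)
    | zero => exact L.zero_mem
    | add a b _ _ ha hb => exact L.add_mem ha hb
    | neg a _ ha => exact L.neg_mem ha
  set H₂ : Submodule ℤ ↥L := (AddSubgroup.toIntSubmodule H).comap L.subtype with hH₂
  -- f.g. of the quotient
  haveI : Module.Finite ℤ ↥L := Module.Finite.equiv
    ((Finsupp.supportedEquivFinsupp (M := ℤ) (R := ℤ) (↑B : Set A)).trans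
      (Finsupp.linearEquivFunOnFinite ℤ ℤ ↥(↑B : Set A))).symm
  haveI hfin : Module.Finite ℤ (↥L ⧸ H₂) :=
    Module.Finite.of_surjective H₂.mkQ (Submodule.mkQ_surjective H₂)
  haveI : Subsingleton (Module ℤ (↥L ⧸ H₂)) := AddCommGroup.uniqueIntModule.instSubsingleton
  have hQfg : AddGroup.FG (↥L ⧸ H₂) := by
    rw [← Module.Finite.iff_addGroup_fg]
    convert hfin
  set q : ↥L ⧸ H₂ := Submodule.Quotient.mk ⟨x, hxL⟩ with hqdef
  have hq0 : q ≠ 0 := by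
    intro h
    rw [hqdef, Submodule.Quotient.mk_eq_zero] at h
    exact hx h
  obtain ⟨n, hn, hny⟩ := resid_fin hQfg hq0
  haveI : NeZero n.toNat := ⟨by omega⟩
  -- the finite-index subgroup
  set φ : (A →₀ ℤ) →+ (↥(↑B : Set A) → ZMod n.toNat) :=
    AddMonoidHom.mk' (fun f b => ((f ↑b : ℤ) : ZMod n.toNat))
      (by intro f g; funext b; simp [Finsupp.add_apply]) with hφ
  refine ⟨φ.ker, ?_, ?_⟩
  · haveI : Finite ((A →₀ ℤ) ⧸ φ.ker) :=
      Finite.of_equiv _ (QuotientAddGroup.quotientKerEquivRange φ).symm.toEquiv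
    exact AddSubgroup.index_ne_zero_of_finite
  · rintro k hk hmem
    rw [AddMonoidHom.mem_ker] at hk
    have hkL : k ∈ L := by
      have hdiff : k = (x + k) - x := by abel
      rw [hdiff]
      exact L.sub_mem (hHL _ hmem) hxL
    have hdvd : ∀ a : A, n ∣ k a := by
      intro a
      by_cases haB : a ∈ B
      · have h1 := congrFun hk ⟨a, haB⟩
        simp only [hφ, AddMonoidHom.mk'_apply, Pi.zero_apply] at h1
        have h2 : ((n.toNat : ℤ)) ∣ k a := (ZMod.intCast_zmod_eq_zero_iff_dvd _ _).mp h1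
        rwa [Int.toNat_of_nonneg hn.le] at h2
      · have h0 : k a = 0 := by
          by_contra hne
          exact haB (hkL (Finsupp.mem_support_iff.mpr hne))
        simp [h0]
    set k' : A →₀ ℤ := Finsupp.mapRange (fun z => z / n) (by simp) k with hk'
    have hk'L : k' ∈ L := fun a ha => hkL (Finsupp.support_mapRange ha)
    have hnk' : n • k' = k := by
      ext a
      rw [show (n • k') a = n • (k' a) from map_zsmul (Finsupp.applyAddHom (M := ℤ) a) n k']
      rw [zsmul_eq_mul, Int.cast_id, hk', Finsupp.mapRange_apply]
      exact Int.mul_ediv_cancel' (hdvd a)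
    -- derive the contradiction with hny
    apply hny (Submodule.Quotient.mk (-⟨k', hk'L⟩))
    have hx' : (⟨x, hxL⟩ : ↥L) = ⟨x + k, hHL _ hmem⟩ + n • (-(⟨k', hk'L⟩ : ↥L)) := by
      apply Subtype.ext
      have hcoe : ((⟨x + k, hHL _ hmem⟩ + n • (-(⟨k', hk'L⟩ : ↥L)) : ↥L) : A →₀ ℤ)
          = (x + k) + n • (-k') := by
        push_cast
        rfl
      rw [hcoe, smul_neg, hnk']
      abel
    rw [hqdef, hx', Submodule.Quotient.mk_add]
    have hmk0 : (Submodule.Quotient.mk ⟨x + k, hHL _ hmem⟩ : ↥L ⧸ H₂) = 0 := by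
      rw [Submodule.Quotient.mk_eq_zero]
      exact hmem
    rw [hmk0, zero_add]
    exact map_zsmul H₂.mkQ n (-(⟨k', hk'L⟩ : ↥L))


/-- Free abelian groups are LERF: every finitely generated
subgroup of `⊕_{a ∈ A} ℤ` is closed in the profinite topology. -/
theorem free_abelian_LERF (A : Type*) (H : AddSubgroup (A →₀ ℤ)) (hfg : H.FG) :
    IsClosed[profiniteTopologyAdd (A →₀ ℤ)] (H : Set (A →₀ ℤ)) := by
  have key := key_step A H hfg
  have hcov : (↑H : Set (A →₀ ℤ))ᶜ = ⋃₀ {U | (∃ K : AddSubgroup (A →₀ ℤ), K.Normal ∧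
      K.index ≠ 0 ∧ ∃ g, U = (g + ·) '' (K : Set (A →₀ ℤ))) ∧ U ∩ ↑H = ∅} := by
    ext z
    constructor
    · intro hz
      obtain ⟨K, hKi, hK⟩ := key z hz
      refine ⟨(z + ·) '' K, ⟨⟨K, inferInstance, hKi, z, rfl⟩, ?_⟩, ⟨0, K.zero_mem, by simp⟩⟩
      rw [Set.eq_empty_iff_forall_notMem]
      rintro u ⟨⟨k, hk, rfl⟩, hu⟩
      exact hK k hk hu
    · rintro ⟨U, ⟨_, hUH⟩, hzU⟩ hzH
      rw [Set.eq_empty_iff_forall_notMem] at hUH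
      exact hUH z ⟨hzU, hzH⟩
  have hopen : TopologicalSpace.GenerateOpen
      {S : Set (A →₀ ℤ) | ∃ K : AddSubgroup (A →₀ ℤ), K.Normal ∧ K.index ≠ 0 ∧
        ∃ g : A →₀ ℤ, S = (g + ·) '' (K : Set (A →₀ ℤ))} ((↑H : Set (A →₀ ℤ))ᶜ) := by
    rw [hcov]
    exact .sUnion _ fun U hU => .basic U hU.1
  exact @IsClosed.mk _ (profiniteTopologyAdd (A →₀ ℤ)) _ hopen
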